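/- arXiv:1804.01207 — 2 statements merged into one kernel-verified Lean document; each statement's English description precedes it below -/
import Mathlib

section
/- (Lower bound on the second moment of any admissible cycle) Let N ≥ 1, let A be a finite alphabet with multiplicities m : A → ℕ satisfying m(a) ≥ 1 for all a and ∑_{a∈A} m(a) = N. Then for every admissible cycle C : ZMod N → A, the sum of squared distances satisfies ∑_{j : ZMod N} Δ_C(j)² ≥ ∑_{a∈A} N²/m(a), as rational numbers. Equivalently, M₂(C) ≥ ∑_{a∈A} N/m(a). -/
open Finset

/-- The distance from position `j` to the next occurrence of the same symbol:
the least positive `d` with `C (j + d) = C j`. -/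
noncomputable def cycleDist {N : ℕ} {A : Type*} (C : ZMod N → A) (j : ZMod N) : ℕ :=
  sInf {d : ℕ | 0 < d ∧ C (j + (d : ZMod N)) = C j}

/-- A cycle is admissible for multiplicities `m` if every fiber has the prescribed size. -/
def Admissible {N : ℕ} [NeZero N] {A : Type*} [Fintype A] [DecidableEq A]
    (m : A → ℕ) (C : ZMod N → A) : Prop :=
  ∀ a : A, (Finset.univ.filter (fun j => C j = a)).card = m a

/-- The mean of a cycle. -/
noncomputable def cycleMean {N : ℕ} [NeZero N] {A : Type*} (C : ZMod N → A) : ℚ :=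
  (∑ j : ZMod N, (cycleDist C j : ℚ)) / N

/-- The second (raw) moment of a cycle. -/
noncomputable def cycleMoment2 {N : ℕ} [NeZero N] {A : Type*} (C : ZMod N → A) : ℚ :=
  (∑ j : ZMod N, (cycleDist C j : ℚ) ^ 2) / N

/-- The variance of a cycle. -/
noncomputable def cycleVariance {N : ℕ} [NeZero N] {A : Type*} (C : ZMod N → A) : ℚ :=
  (∑ j : ZMod N, ((cycleDist C j : ℚ) - cycleMean C) ^ 2) / N

lemma cycleDist_spec {N : ℕ} [NeZero N] {A : Type*} (C : ZMod N → A) (j : ZMod N) :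
    0 < cycleDist C j ∧ C (j + ((cycleDist C j : ℕ) : ZMod N)) = C j := by
  have hne : {d : ℕ | 0 < d ∧ C (j + (d : ZMod N)) = C j}.Nonempty :=
    ⟨N, Nat.pos_of_ne_zero (NeZero.ne N), by simp⟩
  exact Nat.sInf_mem hne

lemma cycleDist_min {N : ℕ} {A : Type*} (C : ZMod N → A) (j : ZMod N) {d : ℕ}
    (hd : 0 < d) (h : C (j + (d : ZMod N)) = C j) : cycleDist C j ≤ d :=
  Nat.sInf_le ⟨hd, h⟩

/-- The sum of distances over one fiber is `N`. -/
lemma sum_cycleDist_fiber {N : ℕ} [NeZero N] {A : Type*} [DecidableEq A]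
    (C : ZMod N → A) (a : A) (hne : ∃ j, C j = a) :
    ∑ j ∈ univ.filter (fun j => C j = a), cycleDist C j = N := by
  classical
  obtain ⟨j0, hj0⟩ := hne
  set F : Finset (ZMod N) := univ.filter (fun j => C j = a) with hF
  -- backward gap: least `d ≥ 0` with `C (k - d) = a`
  set e : ZMod N → ℕ := fun k => sInf {d : ℕ | C (k - (d : ZMod N)) = a} with he
  have heNe : ∀ k : ZMod N, {d : ℕ | C (k - (d : ZMod N)) = a}.Nonempty := by
    intro k
    refine ⟨(k - j0).val, ?_⟩
    simp only [Set.mem_setOf_eq, ZMod.natCast_rightInverse (k - j0)]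
    simpa using hj0
  have hea : ∀ k : ZMod N, C (k - ((e k : ℕ) : ZMod N)) = a := fun k => Nat.sInf_mem (heNe k)
  have he_le : ∀ k (d : ℕ), C (k - (d : ZMod N)) = a → e k ≤ d := fun k d h => Nat.sInf_le h
  have he_min : ∀ k (d : ℕ), d < e k → C (k - (d : ZMod N)) ≠ a := by
    intro k d hd h
    exact absurd (he_le k d h) (not_le.mpr hd)
  -- Claim A : e k < cycleDist C (k - e k)
  have claimA : ∀ k : ZMod N, e k < cycleDist C (k - ((e k : ℕ) : ZMod N)) := by
    intro k
    by_contra hcon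
    push_neg at hcon
    set j := k - ((e k : ℕ) : ZMod N) with hj
    set D := cycleDist C j with hD
    obtain ⟨hDpos, hDeq⟩ := cycleDist_spec C j
    have h1 : C (k - ((e k - D : ℕ) : ZMod N)) = a := by
      have : k - ((e k - D : ℕ) : ZMod N) = j + (D : ZMod N) := by
        rw [Nat.cast_sub hcon]; ring
      rw [this, hDeq, hj]; exact hea k
    have h2 : e k ≤ e k - D := he_le k _ h1
    omega
  -- Claim B : for j in fiber and i < Δ j, e (j + i) = i
  have claimB : ∀ j : ZMod N, C j = a → ∀ i : ℕ, i < cycleDist C j → e (j + (i : ZMod N)) = i := by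
    intro j hja i hi
    have hle : e (j + (i : ZMod N)) ≤ i := he_le _ i (by simpa using hja)
    rcases eq_or_lt_of_le hle with h | h
    · exact h
    · exfalso
      set d := e (j + (i : ZMod N)) with hd
      have h1 : C (j + ((i - d : ℕ) : ZMod N)) = a := by
        have : j + ((i - d : ℕ) : ZMod N) = (j + (i : ZMod N)) - ((d : ℕ) : ZMod N) := by
          rw [Nat.cast_sub h.le]; ring
        rw [this]; exact hea _
      have h2 : cycleDist C j ≤ i - d :=
        cycleDist_min C j (by omega) (by rw [h1, hja])
      omega
  -- the bijection
  have hcard : (F.sigma (fun j => Finset.range (cycleDist C j))).card =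
      (univ : Finset (ZMod N)).card := by
    apply Finset.card_nbij' (fun p => p.1 + ((p.2 : ℕ) : ZMod N))
      (fun k => ⟨k - ((e k : ℕ) : ZMod N), e k⟩)
    · intro p _; exact Finset.mem_univ _
    · intro k _
      simp only [Finset.mem_coe, Finset.mem_sigma, hF, Finset.mem_filter, Finset.mem_univ, true_and,
        Finset.mem_range]
      exact ⟨hea k, claimA k⟩
    · rintro ⟨j, i⟩ hp
      simp only [Finset.mem_coe, Finset.mem_sigma, hF, Finset.mem_filter, Finset.mem_univ, true_and,
        Finset.mem_range] at hp
      obtain ⟨hja, hi⟩ := hp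
      have hei : e (j + (i : ZMod N)) = i := claimB j hja i hi
      simp only [hei]
      congr 1
      ring
    · intro k _
      simp only []
      ring
  rw [Finset.card_sigma] at hcard
  simp only [Finset.card_range] at hcard
  rw [hcard]
  simp [Finset.card_univ, ZMod.card]

/-- Lower bound on the second moment of any admissible cycle:
`∑_j Δ_C(j)² ≥ ∑_a N²/m(a)`, equivalently `M₂(C) ≥ ∑_a N/m(a)`. -/
theorem lower_bound_moment2 {N : ℕ} [NeZero N] {A : Type*} [Fintype A] [DecidableEq A]
    (m : A → ℕ) (hm : ∀ a, 1 ≤ m a) (hsum : ∑ a, m a = N)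
    (C : ZMod N → A) (hC : Admissible m C) :
    (∑ a : A, (N : ℚ) ^ 2 / (m a : ℚ)) ≤ ∑ j : ZMod N, (cycleDist C j : ℚ) ^ 2 ∧
    (∑ a : A, (N : ℚ) / (m a : ℚ)) ≤ cycleMoment2 C := by
  classical
  have hNpos : (0 : ℚ) < N := by
    exact_mod_cast Nat.pos_of_ne_zero (NeZero.ne N)
  have key : ∀ a : A, (N : ℚ) ^ 2 / (m a : ℚ) ≤
      ∑ j ∈ univ.filter (fun j => C j = a), (cycleDist C j : ℚ) ^ 2 := by
    intro a
    have hcard := hC a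
    have hmpos : 0 < m a := hm a
    have hne : ∃ j, C j = a := by
      have : 0 < (univ.filter (fun j => C j = a)).card := by rw [hcard]; exact hmpos
      obtain ⟨j, hj⟩ := Finset.card_pos.mp this
      exact ⟨j, (Finset.mem_filter.mp hj).2⟩
    have hsumN : ∑ j ∈ univ.filter (fun j => C j = a), (cycleDist C j : ℚ) = N := by
      rw [← Nat.cast_sum]
      exact_mod_cast congrArg (Nat.cast : ℕ → ℚ) (sum_cycleDist_fiber C a hne)
    have hCS := sq_sum_le_card_mul_sum_sq
      (s := univ.filter (fun j => C j = a)) (f := fun j => (cycleDist C j : ℚ))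
    rw [hsumN, hcard] at hCS
    rw [div_le_iff₀ (by exact_mod_cast hmpos)]
    calc (N : ℚ) ^ 2 ≤ (m a : ℕ) * ∑ j ∈ univ.filter (fun j => C j = a),
        (cycleDist C j : ℚ) ^ 2 := hCS
      _ = (∑ j ∈ univ.filter (fun j => C j = a), (cycleDist C j : ℚ) ^ 2) * (m a : ℚ) := by
        ring
  have main : (∑ a : A, (N : ℚ) ^ 2 / (m a : ℚ)) ≤ ∑ j : ZMod N, (cycleDist C j : ℚ) ^ 2 := by
    have := Finset.sum_fiberwise_of_maps_to (g := C) (s := (univ : Finset (ZMod N)))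
      (t := (univ : Finset A)) (fun x _ => Finset.mem_univ _)
      (fun j => (cycleDist C j : ℚ) ^ 2)
    rw [← this]
    exact Finset.sum_le_sum fun a _ => key a
  refine ⟨main, ?_⟩
  unfold cycleMoment2
  rw [le_div_iff₀ hNpos]
  calc (∑ a : A, (N : ℚ) / (m a : ℚ)) * N = ∑ a : A, (N : ℚ) ^ 2 / (m a : ℚ) := by
        rw [Finset.sum_mul]
        refine Finset.sum_congr rfl fun a _ => ?_
        field_simp
    _ ≤ _ := main
end

section
/- (Main theorem: explicit minimum of the second moment for binary cycles) Let m₁ ≥ m₂ ≥ 1 be natural numbers, N = m₁ + m₂, and set ℓ = ⌊N/m₂⌋. Then the minimum of ∑_{j : ZMod N} Δ_C(j)² over all admissible cycles C : ZMod N → {a₁, a₂} (with fibers of sizes m₁ and m₂) exists and equals m₁ + 3·m₂ + (m₂·(ℓ+1) − N)·ℓ² + (N − m₂·ℓ)·(ℓ+1)². Consequently, by the variance–moment identity, the minimum variance over admissible cycles equals (1/N)·(m₁ + 3·m₂ + (m₂·(ℓ+1) − N)·ℓ² + (N − m₂·ℓ)·(ℓ+1)²) − 4. -/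
open Finset

section basic
set_option linter.unusedSectionVars false
variable {N : ℕ} [NeZero N] {A : Type*} (C : ZMod N → A) (j : ZMod N)

lemma cycleDist_mem : 0 < cycleDist C j ∧ C (j + (cycleDist C j : ZMod N)) = C j := by
  have hN : 0 < N := Nat.pos_of_ne_zero (NeZero.ne N)
  have hmem : N ∈ {d : ℕ | 0 < d ∧ C (j + (d : ZMod N)) = C j} := ⟨hN, by simp⟩
  exact Nat.sInf_mem ⟨N, hmem⟩

lemma cycleDist_pos : 0 < cycleDist C j := (cycleDist_mem C j).1

lemma cycleDist_add : C (j + (cycleDist C j : ZMod N)) = C j := (cycleDist_mem C j).2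

lemma cycleDist_le : cycleDist C j ≤ N := by
  have hN : 0 < N := Nat.pos_of_ne_zero (NeZero.ne N)
  have hmem : N ∈ {d : ℕ | 0 < d ∧ C (j + (d : ZMod N)) = C j} := ⟨hN, by simp⟩
  exact Nat.sInf_le hmem

lemma cycleDist_min_s13 {d : ℕ} (h1 : 0 < d) (h2 : d < cycleDist C j) :
    C (j + (d : ZMod N)) ≠ C j := by
  intro h
  have : cycleDist C j ≤ d := Nat.sInf_le ⟨h1, h⟩
  omega

lemma cycleDist_eq {d₀ : ℕ} (h1 : 0 < d₀) (h2 : C (j + (d₀ : ZMod N)) = C j)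
    (h3 : ∀ d, 0 < d → d < d₀ → C (j + (d : ZMod N)) ≠ C j) : cycleDist C j = d₀ := by
  refine le_antisymm (Nat.sInf_le ⟨h1, h2⟩) ?_
  by_contra hlt
  push_neg at hlt
  exact h3 _ (cycleDist_pos C j) hlt (cycleDist_add C j)

end basic

lemma fiber_inj_aux {N : ℕ} [NeZero N] {A : Type*} (C : ZMod N → A) (a : A)
    {j j' : ZMod N} {t t' : ℕ} (hj : C j = a) (hj' : C j' = a)
    (ht : 1 ≤ t) (ht2 : t ≤ cycleDist C j) (ht' : 1 ≤ t') (ht2' : t' ≤ cycleDist C j')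
    (heq : j + (t : ZMod N) = j' + (t' : ZMod N)) (hle : t ≤ t') : j = j' ∧ t = t' := by
  rcases eq_or_lt_of_le hle with h | h
  · subst h
    exact ⟨add_right_cancel heq, rfl⟩
  · exfalso
    have hcast : j' + ((t' - t : ℕ) : ZMod N) = j := by
      push_cast [Nat.cast_sub (le_of_lt h)]
      have : (j : ZMod N) = j' + (t' : ZMod N) - (t : ZMod N) := by
        rw [← heq]; ring
      rw [this]; ring
    have hkey : C (j' + ((t' - t : ℕ) : ZMod N)) = C j' := by
      rw [hcast, hj, hj']
    exact cycleDist_min_s13 C j' (by omega) (by omega) hkey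

lemma fiber_sum {N : ℕ} [NeZero N] {A : Type*} (C : ZMod N → A) (a : A)
    [DecidablePred (fun j : ZMod N => C j = a)]
    (hne : ∃ s : ZMod N, C s = a) :
    ∑ j ∈ univ.filter (fun j => C j = a), cycleDist C j = N := by
  classical
  set S := univ.filter (fun j : ZMod N => C j = a) with hS
  have hmemS : ∀ j, j ∈ S ↔ C j = a := by intro j; simp [hS]
  set T := S.sigma (fun j => Finset.Icc 1 (cycleDist C j)) with hT
  have hcardT : T.card = ∑ j ∈ S, cycleDist C j := by
    rw [hT, Finset.card_sigma]
    exact Finset.sum_congr rfl (fun j _ => by rw [Nat.card_Icc]; omega)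
  have hNuniv : (univ : Finset (ZMod N)).card = N := by
    rw [Finset.card_univ, ZMod.card]
  have hub : T.card ≤ N := by
    have key : T.card ≤ (univ : Finset (ZMod N)).card := by
      apply Finset.card_le_card_of_injOn (fun x : Σ _ : ZMod N, ℕ => x.1 + (x.2 : ZMod N))
        (fun x _ => mem_univ _)
      rintro ⟨j, t⟩ hjt ⟨j', t'⟩ hjt' heq
      simp only [Finset.mem_coe, hT, Finset.mem_sigma, Finset.mem_Icc] at hjt hjt'
      obtain ⟨hj, ht1, ht2⟩ := hjt
      obtain ⟨hj', ht1', ht2'⟩ := hjt'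
      rw [hmemS] at hj hj'
      simp only at heq
      rcases le_total t t' with hle | hle
      · obtain ⟨h1, h2⟩ := fiber_inj_aux C a hj hj' ht1 ht2 ht1' ht2' heq hle
        simp [h1, h2]
      · obtain ⟨h1, h2⟩ := fiber_inj_aux C a hj' hj ht1' ht2' ht1 ht2 heq.symm hle
        simp [h1, h2]
    rwa [hNuniv] at key
  have hlb : N ≤ T.card := by
    have hgex : ∀ k : ZMod N, ∃ p : Σ _ : ZMod N, ℕ, p ∈ T ∧ p.1 + (p.2 : ZMod N) = k := by
      intro k
      obtain ⟨s, hs⟩ := hne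
      have hTne : ∃ t : ℕ, 0 < t ∧ C (k - (t : ZMod N)) = a := by
        by_cases hsk : s = k
        · exact ⟨N, Nat.pos_of_ne_zero (NeZero.ne N), by simp [← hsk, hs]⟩
        · refine ⟨(k - s).val, ?_, ?_⟩
          · rcases Nat.eq_zero_or_pos (k - s).val with h0 | h0
            · rw [ZMod.val_eq_zero] at h0
              exact absurd (sub_eq_zero.mp h0).symm hsk
            · exact h0
          · have h1 : (((k - s).val : ℕ) : ZMod N) = k - s := ZMod.natCast_rightInverse _
            rw [h1, sub_sub_cancel, hs]
      set t := Nat.find hTne with htdef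
      obtain ⟨htpos, hta⟩ := Nat.find_spec hTne
      have htmin : ∀ m, m < t → ¬(0 < m ∧ C (k - (m : ZMod N)) = a) :=
        fun m hm => Nat.find_min hTne hm
      refine ⟨⟨k - (t : ZMod N), t⟩, ?_, ?_⟩
      · rw [hT, Finset.mem_sigma]
        refine ⟨(hmemS _).2 hta, Finset.mem_Icc.mpr ⟨htpos, ?_⟩⟩
        show t ≤ cycleDist C (k - (t : ZMod N))
        by_contra hgt
        push_neg at hgt
        set d := cycleDist C (k - (t : ZMod N)) with hd
        have hd1 : 0 < d := cycleDist_pos _ _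
        have hd2 : C ((k - (t : ZMod N)) + (d : ZMod N)) = C (k - (t : ZMod N)) :=
          cycleDist_add _ _
        refine htmin (t - d) (by omega) ⟨by omega, ?_⟩
        have hcast : k - ((t - d : ℕ) : ZMod N) = (k - (t : ZMod N)) + (d : ZMod N) := by
          push_cast [Nat.cast_sub (le_of_lt hgt)]
          ring
        rw [hcast, hd2, hta]
      · simp
    choose g hgT hgk using hgex
    have key : (univ : Finset (ZMod N)).card ≤ T.card := by
      apply Finset.card_le_card_of_injOn g (fun k _ => hgT k)
      intro k _ k' _ hkk
      rw [← hgk k, ← hgk k', hkk]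
    rwa [hNuniv] at key
  rw [← hcardT]
  omega

lemma fin2_not_zero (x : Fin 2) : (¬ x = 0) ↔ x = 1 := by revert x; decide

lemma sum_split {N : ℕ} [NeZero N] (C : ZMod N → Fin 2) (f : ZMod N → ℕ) :
    ∑ j : ZMod N, f j = ∑ j ∈ univ.filter (fun j => C j = 0), f j
      + ∑ j ∈ univ.filter (fun j => C j = 1), f j := by
  classical
  rw [← Finset.sum_filter_add_sum_filter_not univ (fun j => C j = 0) f]
  congr 1
  apply Finset.sum_congr _ (fun _ _ => rfl)
  apply Finset.filter_congr
  intro j _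
  simp [fin2_not_zero]

lemma fiber_nonempty {N : ℕ} [NeZero N] (C : ZMod N → Fin 2) (a : Fin 2) {m : ℕ}
    (h1 : 1 ≤ m) (hcard : (univ.filter (fun j => C j = a)).card = m) :
    ∃ s : ZMod N, C s = a := by
  classical
  have : (univ.filter (fun j => C j = a)).Nonempty := by
    rw [← Finset.card_pos, hcard]; omega
  obtain ⟨j, hj⟩ := this
  exact ⟨j, (Finset.mem_filter.mp hj).2⟩

lemma total_sum {N : ℕ} [NeZero N] {m₁ m₂ : ℕ} (h1 : 1 ≤ m₁) (h2 : 1 ≤ m₂)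
    (C : ZMod N → Fin 2) (hC : Admissible ![m₁, m₂] C) :
    ∑ j : ZMod N, cycleDist C j = 2 * N := by
  classical
  have e0 := fiber_sum C 0 (fiber_nonempty C 0 h1 (by simpa using hC 0))
  have e1 := fiber_sum C 1 (fiber_nonempty C 1 h2 (by simpa using hC 1))
  rw [sum_split C (fun j => cycleDist C j), e0, e1]
  ring

lemma variance_eq {N : ℕ} [NeZero N] (C : ZMod N → Fin 2)
    (h : ∑ j : ZMod N, cycleDist C j = 2 * N) :
    cycleVariance C = ((∑ j : ZMod N, cycleDist C j ^ 2 : ℕ) : ℚ) / N - 4 := by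
  have hN0 : (N : ℚ) ≠ 0 := Nat.cast_ne_zero.mpr (NeZero.ne N)
  have hsum : ∑ j : ZMod N, (cycleDist C j : ℚ) = 2 * N := by
    have := congrArg (fun n : ℕ => (n : ℚ)) h
    push_cast at this
    exact this
  have hmean : cycleMean C = 2 := by
    unfold cycleMean
    rw [hsum]
    field_simp
  unfold cycleVariance
  rw [hmean]
  have hexp : ∑ j : ZMod N, ((cycleDist C j : ℚ) - 2) ^ 2
      = ∑ j : ZMod N, (cycleDist C j : ℚ) ^ 2 - 4 * N := by
    have : ∀ j : ZMod N, ((cycleDist C j : ℚ) - 2) ^ 2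
        = (cycleDist C j : ℚ) ^ 2 - 4 * (cycleDist C j : ℚ) + 4 := fun j => by ring
    rw [Finset.sum_congr rfl (fun j _ => this j), Finset.sum_add_distrib,
      Finset.sum_sub_distrib, ← Finset.mul_sum, hsum, Finset.sum_const,
      Finset.card_univ, ZMod.card]
    push_cast
    ring
  rw [hexp]
  have hsq : ((∑ j : ZMod N, cycleDist C j ^ 2 : ℕ) : ℚ)
      = ∑ j : ZMod N, (cycleDist C j : ℚ) ^ 2 := by push_cast; rfl
  rw [hsq]
  field_simp

lemma sq_bound (x t : ℕ) : (2 * t + 1) * x ≤ x ^ 2 + t * (t + 1) := by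
  rcases le_or_gt x t with h | h
  · nlinarith
  · nlinarith

lemma fiber_lb {N : ℕ} [NeZero N] {A : Type*} (C : ZMod N → A) (a : A)
    [DecidablePred (fun j : ZMod N => C j = a)]
    (hne : ∃ s : ZMod N, C s = a) (t m : ℕ)
    (hcard : (univ.filter (fun j => C j = a)).card = m) :
    (2 * t + 1) * N ≤ (∑ j ∈ univ.filter (fun j => C j = a), cycleDist C j ^ 2)
      + m * (t * (t + 1)) := by
  have h1 := fiber_sum C a hne
  calc (2 * t + 1) * N = ∑ j ∈ univ.filter (fun j => C j = a), (2 * t + 1) * cycleDist C j := by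
        rw [← Finset.mul_sum, h1]
    _ ≤ ∑ j ∈ univ.filter (fun j => C j = a), (cycleDist C j ^ 2 + t * (t + 1)) :=
        Finset.sum_le_sum (fun j _ => sq_bound _ t)
    _ = _ := by
        rw [Finset.sum_add_distrib, Finset.sum_const, hcard, smul_eq_mul]

/-- position of the `i`-th symbol-`1` slot -/
def Pf (ℓ r i : ℕ) : ℕ := i * ℓ + min i r

/-- gap length of block `i` -/
def gf (ℓ r i : ℕ) : ℕ := ℓ + if i < r then 1 else 0

def Bset (ℓ r m₂ : ℕ) : Finset ℕ := (Finset.range m₂).image (Pf ℓ r)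

def cyc (N ℓ r m₂ : ℕ) : ZMod N → Fin 2 :=
  fun j => if j.val ∈ Bset ℓ r m₂ then 1 else 0

section constr

variable {N m₂ ℓ r : ℕ} (hl : 2 ≤ ℓ) (hr : r < m₂) (hN : N = m₂ * ℓ + r)

lemma Pf_mono {i j : ℕ} (h : i ≤ j) : Pf ℓ r i ≤ Pf ℓ r j := by
  unfold Pf
  have := Nat.mul_le_mul_right ℓ h
  omega

include hl in
lemma Pf_step (i : ℕ) : Pf ℓ r (i + 1) = Pf ℓ r i + gf ℓ r i := by
  unfold Pf gf
  rw [add_mul, one_mul]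
  rcases Nat.lt_or_ge i r with h | h
  · simp only [if_pos h]
    omega
  · simp only [if_neg (by omega : ¬ i < r)]
    omega

include hl in
lemma gf_ge (i : ℕ) : 2 ≤ gf ℓ r i := by
  unfold gf
  split <;> omega

include hl in
lemma Pf_strict {i j : ℕ} (h : i < j) : Pf ℓ r i < Pf ℓ r j := by
  have h1 := Pf_step (ℓ := ℓ) (r := r) hl i
  have h2 := gf_ge (ℓ := ℓ) (r := r) hl i
  have h3 : Pf ℓ r (i + 1) ≤ Pf ℓ r j := Pf_mono h
  omega

include hr hN in
lemma Pf_top : Pf ℓ r m₂ = N := by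
  unfold Pf
  omega

lemma mem_Bset {x : ℕ} : x ∈ Bset ℓ r m₂ ↔ ∃ i < m₂, Pf ℓ r i = x := by
  simp [Bset]

include hl in
lemma not_mem_between {i x : ℕ} (hi : i + 1 ≤ m₂) (h1 : Pf ℓ r i < x)
    (h2 : x < Pf ℓ r (i + 1)) : x ∉ Bset ℓ r m₂ := by
  rw [mem_Bset]
  rintro ⟨k, hk, hkx⟩
  rcases Nat.lt_or_ge k (i + 1) with h | h
  · have := Pf_mono (ℓ := ℓ) (r := r) (by omega : k ≤ i)
    omega
  · have := Pf_mono (ℓ := ℓ) (r := r) h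
    omega

variable [NeZero N]

lemma cyc_cast (x : ℕ) :
    cyc N ℓ r m₂ ((x : ZMod N)) = if x % N ∈ Bset ℓ r m₂ then 1 else 0 := by
  rw [cyc, ZMod.val_natCast]

include hl hr hN in
lemma cyc_Pf {i : ℕ} (hi : i < m₂) : cyc N ℓ r m₂ ((Pf ℓ r i : ZMod N)) = 1 := by
  have hlt : Pf ℓ r i < N := by
    rw [← Pf_top hr hN]
    exact Pf_strict hl hi
  rw [cyc_cast, Nat.mod_eq_of_lt hlt, if_pos (mem_Bset.mpr ⟨i, hi, rfl⟩)]

include hl hr hN in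
lemma cyc_Pf_succ {i : ℕ} (hi : i + 1 ≤ m₂) :
    cyc N ℓ r m₂ ((Pf ℓ r (i + 1) : ZMod N)) = 1 := by
  rcases Nat.lt_or_ge (i + 1) m₂ with h | h
  · exact cyc_Pf hl hr hN h
  · have hieq : i + 1 = m₂ := by omega
    have : Pf ℓ r (i + 1) = N := by rw [hieq]; exact Pf_top hr hN
    rw [this, cyc_cast, Nat.mod_self]
    have h0 : (0 : ℕ) ∈ Bset ℓ r m₂ := mem_Bset.mpr ⟨0, by omega, by simp [Pf]⟩
    rw [if_pos h0]

include hl hr hN in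
lemma cyc_between {i x : ℕ} (hi : i + 1 ≤ m₂) (h1 : Pf ℓ r i < x)
    (h2 : x < Pf ℓ r (i + 1)) : cyc N ℓ r m₂ ((x : ZMod N)) = 0 := by
  have hlt : x < N := by
    have := Pf_mono (ℓ := ℓ) (r := r) hi
    rw [← Pf_top hr hN]
    omega
  rw [cyc_cast, Nat.mod_eq_of_lt hlt, if_neg (not_mem_between hl hi h1 h2)]

include hl hr hN in
lemma cyc_N_succ : cyc N ℓ r m₂ (((N + 1 : ℕ) : ZMod N)) = 0 := by
  have hN2 : 2 ≤ N := by
    have h1 : 1 * ℓ ≤ m₂ * ℓ := Nat.mul_le_mul_right ℓ (by omega)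
    omega
  have hmod : (N + 1) % N = 1 := by
    rw [Nat.add_comm, Nat.add_mod_right]
    exact Nat.mod_eq_of_lt hN2
  rw [cyc_cast, hmod]
  have h1 : Pf ℓ r 0 < 1 := by simp [Pf]
  have h2 : (1 : ℕ) < Pf ℓ r 1 := by
    unfold Pf
    omega
  exact if_neg (not_mem_between hl (by omega) h1 h2)

-- distance at a `1`-position
include hl hr hN in
lemma dist_b {i : ℕ} (hi : i < m₂) :
    cycleDist (cyc N ℓ r m₂) ((Pf ℓ r i : ZMod N)) = gf ℓ r i := by
  have hstep := Pf_step (ℓ := ℓ) (r := r) hl i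
  have hg := gf_ge (ℓ := ℓ) (r := r) hl i
  apply cycleDist_eq _ _ (by omega)
  · rw [← Nat.cast_add, ← hstep, cyc_Pf_succ hl hr hN hi, cyc_Pf hl hr hN hi]
  · intro d hd1 hd2 hcontra
    rw [← Nat.cast_add, cyc_between hl hr hN hi (by omega) (by omega),
      cyc_Pf hl hr hN hi] at hcontra
    exact absurd hcontra (by decide)

-- distance at a `0`-position not preceding a `1`
include hl hr hN in
lemma dist_a_mid {i x : ℕ} (hi : i + 1 ≤ m₂) (h1 : Pf ℓ r i < x)
    (h2 : x + 1 < Pf ℓ r (i + 1)) :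
    cycleDist (cyc N ℓ r m₂) ((x : ZMod N)) = 1 := by
  apply cycleDist_eq _ _ (by omega)
  · rw [← Nat.cast_add, cyc_between hl hr hN hi (by omega) (by omega),
      cyc_between hl hr hN hi h1 (by omega)]
  · intro d hd1 hd2
    omega

-- distance at the `0`-position just before a `1`
include hl hr hN in
lemma dist_a_last {i : ℕ} (hi : i + 1 ≤ m₂) :
    cycleDist (cyc N ℓ r m₂) (((Pf ℓ r (i + 1) - 1 : ℕ) : ZMod N)) = 2 := by
  have hstep := Pf_step (ℓ := ℓ) (r := r) hl i
  have hg := gf_ge (ℓ := ℓ) (r := r) hl i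
  set x := Pf ℓ r (i + 1) - 1 with hx
  have hx1 : x + 1 = Pf ℓ r (i + 1) := by omega
  have hCx : cyc N ℓ r m₂ ((x : ZMod N)) = 0 :=
    cyc_between hl hr hN hi (by omega) (by omega)
  apply cycleDist_eq _ _ (by omega)
  · rw [hCx, ← Nat.cast_add]
    rcases Nat.lt_or_ge (i + 1) m₂ with h | h
    · have hstep2 := Pf_step (ℓ := ℓ) (r := r) hl (i + 1)
      have hg2 := gf_ge (ℓ := ℓ) (r := r) hl (i + 1)
      exact cyc_between hl hr hN h (by omega) (by omega)
    · have hieq : Pf ℓ r (i + 1) = N := by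
        have : i + 1 = m₂ := by omega
        rw [this]; exact Pf_top hr hN
      have : x + 2 = N + 1 := by omega
      rw [this]
      exact cyc_N_succ hl hr hN
  · intro d hd1 hd2
    have hd : d = 1 := by omega
    subst hd
    rw [hCx, ← Nat.cast_add, hx1, cyc_Pf_succ hl hr hN hi]
    decide

lemma cyc_eq_one_iff (j : ZMod N) :
    cyc N ℓ r m₂ j = 1 ↔ j.val ∈ Bset ℓ r m₂ := by
  unfold cyc
  by_cases h : j.val ∈ Bset ℓ r m₂
  · simp [h]
  · simp only [h, if_neg, iff_false]
    decide

include hl hr hN in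
lemma Bset_lt {x : ℕ} (hx : x ∈ Bset ℓ r m₂) : x < N := by
  obtain ⟨i, hi, hPi⟩ := mem_Bset.mp hx
  rw [← hPi, ← Pf_top hr hN]
  exact Pf_strict hl hi

include hl hr hN in
lemma cyc_card_one :
    (univ.filter (fun j : ZMod N => cyc N ℓ r m₂ j = 1)).card = m₂ := by
  have hBcard : (Bset ℓ r m₂).card = m₂ := by
    rw [Bset, Finset.card_image_of_injOn, Finset.card_range]
    intro i hi j hj hij
    simp only [Finset.coe_range, Set.mem_Iio] at hi hj
    by_contra hne
    rcases Nat.lt_or_ge i j with h | h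
    · exact absurd hij (Nat.ne_of_lt (Pf_strict hl h))
    · exact absurd hij.symm (Nat.ne_of_lt (Pf_strict hl (by omega)))
  have key : (univ.filter (fun j : ZMod N => cyc N ℓ r m₂ j = 1)).card
      = (Bset ℓ r m₂).card := by
    apply Finset.card_nbij (fun j => j.val)
    · intro j hj
      rw [Finset.mem_coe, Finset.mem_filter] at hj
      exact (cyc_eq_one_iff j).mp hj.2
    · exact Set.injOn_of_injective (ZMod.val_injective N)
    · intro x hx
      rw [Finset.mem_coe] at hx
      have hxN : x < N := Bset_lt hl hr hN hx
      refine ⟨(x : ZMod N), ?_, ZMod.val_cast_of_lt hxN⟩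
      rw [Finset.mem_coe, Finset.mem_filter]
      exact ⟨mem_univ _, (cyc_eq_one_iff _).mpr (by rwa [ZMod.val_cast_of_lt hxN])⟩
  rw [key, hBcard]

include hl hr hN in
lemma cyc_admissible {m₁ : ℕ} (hm : N = m₁ + m₂) :
    Admissible ![m₁, m₂] (cyc N ℓ r m₂) := by
  have h1 := cyc_card_one hl hr hN
  have hsplit := Finset.card_filter_add_card_filter_not
    (s := (univ : Finset (ZMod N))) (p := fun j => cyc N ℓ r m₂ j = 1)
  have huniv : (univ : Finset (ZMod N)).card = N := by
    rw [Finset.card_univ, ZMod.card]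
  have hfilt : (univ.filter (fun j : ZMod N => ¬ cyc N ℓ r m₂ j = 1))
      = univ.filter (fun j : ZMod N => cyc N ℓ r m₂ j = 0) := by
    apply Finset.filter_congr
    intro j _
    constructor
    · intro h
      rcases Fin.exists_fin_two.mp ⟨cyc N ℓ r m₂ j, rfl⟩ with h' | h'
      · exact h'
      · exact absurd h' h
    · intro h h'
      rw [h] at h'
      exact absurd h' (by decide)
  intro a
  fin_cases a
  · show (univ.filter (fun j : ZMod N => cyc N ℓ r m₂ j = 0)).card = ![m₁, m₂] 0
    simp only [Matrix.cons_val_zero]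
    rw [← hfilt]
    omega
  · show (univ.filter (fun j : ZMod N => cyc N ℓ r m₂ j = 1)).card = ![m₁, m₂] 1
    simpa using h1

lemma sum_zmod (f : ZMod N → ℕ) :
    ∑ j : ZMod N, f j = ∑ x ∈ Finset.range N, f ((x : ZMod N)) := by
  apply Finset.sum_nbij' (i := fun j : ZMod N => j.val) (j := fun x : ℕ => (x : ZMod N))
  · intro j _
    rw [Finset.mem_range]
    exact ZMod.val_lt j
  · intro x _
    exact mem_univ _
  · intro j _
    exact ZMod.natCast_rightInverse j
  · intro x hx
    exact ZMod.val_cast_of_lt (Finset.mem_range.mp hx)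
  · intro j _
    rw [ZMod.natCast_rightInverse j]

lemma sum_blocks (f : ℕ → ℕ) (m : ℕ) :
    ∑ x ∈ Finset.range (Pf ℓ r m), f x
      = ∑ i ∈ Finset.range m, ∑ x ∈ Finset.Ico (Pf ℓ r i) (Pf ℓ r (i + 1)), f x := by
  induction m with
  | zero => simp [Pf]
  | succ m ih =>
    rw [Finset.sum_range_succ, ← ih, Finset.range_eq_Ico, ← Finset.sum_Ico_consecutive
      f (Nat.zero_le (Pf ℓ r m)) (Pf_mono (Nat.le_succ m))]
    rw [Finset.range_eq_Ico]

include hl hr hN in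
lemma block_sum {i : ℕ} (hi : i < m₂) :
    ∑ x ∈ Finset.Ico (Pf ℓ r i) (Pf ℓ r (i + 1)),
        cycleDist (cyc N ℓ r m₂) ((x : ZMod N)) ^ 2
      = gf ℓ r i ^ 2 + gf ℓ r i + 2 := by
  have hstep := Pf_step (ℓ := ℓ) (r := r) hl i
  have hg := gf_ge (ℓ := ℓ) (r := r) hl i
  have h1 : Pf ℓ r (i + 1) = (Pf ℓ r i + gf ℓ r i - 1) + 1 := by omega
  rw [h1, Finset.sum_Ico_succ_top (by omega),
    Finset.sum_eq_sum_Ico_succ_bot (by omega)]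
  have hmid : ∑ x ∈ Finset.Ico (Pf ℓ r i + 1) (Pf ℓ r i + gf ℓ r i - 1),
      cycleDist (cyc N ℓ r m₂) ((x : ZMod N)) ^ 2 = gf ℓ r i - 2 := by
    have hconst : ∀ x ∈ Finset.Ico (Pf ℓ r i + 1) (Pf ℓ r i + gf ℓ r i - 1),
        cycleDist (cyc N ℓ r m₂) ((x : ZMod N)) ^ 2 = 1 := by
      intro x hx
      rw [Finset.mem_Ico] at hx
      rw [dist_a_mid hl hr hN hi (by omega) (by omega), one_pow]
    rw [Finset.sum_congr rfl hconst, Finset.sum_const, Nat.card_Ico, smul_eq_mul]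
    omega
  have hfirst : cycleDist (cyc N ℓ r m₂) ((Pf ℓ r i : ZMod N)) ^ 2 = gf ℓ r i ^ 2 := by
    rw [dist_b hl hr hN hi]
  have hlast : cycleDist (cyc N ℓ r m₂) (((Pf ℓ r i + gf ℓ r i - 1 : ℕ) : ZMod N)) ^ 2
      = 4 := by
    have : Pf ℓ r i + gf ℓ r i - 1 = Pf ℓ r (i + 1) - 1 := by omega
    rw [this, dist_a_last hl hr hN hi]
    norm_num
  rw [hmid, hfirst, hlast]
  omega

include hl hr hN in
lemma cyc_sum {m₁ : ℕ} (hm : N = m₁ + m₂) :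
    ∑ j : ZMod N, cycleDist (cyc N ℓ r m₂) j ^ 2
      = m₁ + 3 * m₂ + (m₂ - r) * ℓ ^ 2 + r * (ℓ + 1) ^ 2 := by
  rw [sum_zmod]
  have hrange : Finset.range N = Finset.range (Pf ℓ r m₂) := by rw [Pf_top hr hN]
  rw [hrange, sum_blocks,
    Finset.sum_congr rfl (fun i hi => block_sum hl hr hN (Finset.mem_range.mp hi))]
  have hsplit : ∑ i ∈ Finset.range m₂, (gf ℓ r i ^ 2 + gf ℓ r i + 2)
      = ∑ i ∈ Finset.Ico 0 r, (gf ℓ r i ^ 2 + gf ℓ r i + 2)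
        + ∑ i ∈ Finset.Ico r m₂, (gf ℓ r i ^ 2 + gf ℓ r i + 2) := by
    rw [Finset.range_eq_Ico,
      Finset.sum_Ico_consecutive _ (Nat.zero_le r) (le_of_lt hr)]
  rw [hsplit]
  have hA : ∑ i ∈ Finset.Ico 0 r, (gf ℓ r i ^ 2 + gf ℓ r i + 2)
      = r * ((ℓ + 1) ^ 2 + (ℓ + 1) + 2) := by
    rw [Finset.sum_congr rfl (fun i hi => ?_), Finset.sum_const, Nat.card_Ico,
      smul_eq_mul, Nat.sub_zero]
    rw [Finset.mem_Ico] at hi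
    unfold gf
    rw [if_pos hi.2]
  have hB : ∑ i ∈ Finset.Ico r m₂, (gf ℓ r i ^ 2 + gf ℓ r i + 2)
      = (m₂ - r) * (ℓ ^ 2 + ℓ + 2) := by
    rw [Finset.sum_congr rfl (fun i hi => ?_), Finset.sum_const, Nat.card_Ico,
      smul_eq_mul]
    rw [Finset.mem_Ico] at hi
    unfold gf
    rw [if_neg (by omega : ¬ i < r)]
    ring
  rw [hA, hB]
  have hrm : r ≤ m₂ := le_of_lt hr
  have hNz : (N : ℤ) = m₂ * ℓ + r := by exact_mod_cast congrArg (Nat.cast : ℕ → ℤ) hN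
  have hmz : (N : ℤ) = m₁ + m₂ := by exact_mod_cast congrArg (Nat.cast : ℕ → ℤ) hm
  zify [hrm]
  linear_combination hmz - hNz

end constr

/-- Main theorem: the minimum of the sum of squared distances over admissible binary cycles
exists and equals `m₁ + 3m₂ + (m₂(ℓ+1) − N)ℓ² + (N − m₂ℓ)(ℓ+1)²` with `ℓ = ⌊N/m₂⌋`;
consequently the minimum variance equals that quantity divided by `N`, minus 4. -/
theorem main_min_moment2 (m₁ m₂ : ℕ) (h2 : 1 ≤ m₂) (h12 : m₂ ≤ m₁)
    (N : ℕ) (hN : N = m₁ + m₂) [NeZero N] (ℓ : ℕ) (hℓ : ℓ = N / m₂) :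
    IsLeast {s : ℕ | ∃ C : ZMod N → Fin 2, Admissible ![m₁, m₂] C ∧
        ∑ j : ZMod N, cycleDist C j ^ 2 = s}
      (m₁ + 3 * m₂ + (m₂ * (ℓ + 1) - N) * ℓ ^ 2 + (N - m₂ * ℓ) * (ℓ + 1) ^ 2) ∧
    IsLeast {v : ℚ | ∃ C : ZMod N → Fin 2, Admissible ![m₁, m₂] C ∧ cycleVariance C = v}
      (((m₁ + 3 * m₂ + (m₂ * (ℓ + 1) - N) * ℓ ^ 2 + (N - m₂ * ℓ) * (ℓ + 1) ^ 2 : ℕ) : ℚ)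
        / (N : ℚ) - 4) := by
  classical
  have hm1 : 1 ≤ m₁ := le_trans h2 h12
  set r := N % m₂ with hrdef
  have hdm : N = m₂ * ℓ + r := by
    rw [hℓ, hrdef]
    exact (Nat.div_add_mod N m₂).symm
  have hrlt : r < m₂ := Nat.mod_lt _ h2
  have hl2 : 2 ≤ ℓ := by
    rw [hℓ, Nat.le_div_iff_mul_le h2]
    omega
  set T := m₁ + 3 * m₂ + (m₂ * (ℓ + 1) - N) * ℓ ^ 2 + (N - m₂ * ℓ) * (ℓ + 1) ^ 2 with hT
  have hsub1 : m₂ * (ℓ + 1) - N = m₂ - r := by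
    have hexp : m₂ * (ℓ + 1) = m₂ * ℓ + m₂ := by ring
    omega
  have hsub2 : N - m₂ * ℓ = r := by omega
  have hTeq : T = m₁ + 3 * m₂ + (m₂ - r) * ℓ ^ 2 + r * (ℓ + 1) ^ 2 := by
    rw [hT, hsub1, hsub2]
  -- the witness cycle
  have hCadm : Admissible ![m₁, m₂] (cyc N ℓ r m₂) := cyc_admissible hl2 hrlt hdm hN
  have hCsum : ∑ j : ZMod N, cycleDist (cyc N ℓ r m₂) j ^ 2 = T := by
    rw [hTeq]
    exact cyc_sum hl2 hrlt hdm hN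
  -- the lower bound
  have hlb : ∀ s ∈ {s : ℕ | ∃ C : ZMod N → Fin 2, Admissible ![m₁, m₂] C ∧
      ∑ j : ZMod N, cycleDist C j ^ 2 = s}, T ≤ s := by
    rintro s ⟨C, hC, rfl⟩
    have h0card : (univ.filter (fun j : ZMod N => C j = 0)).card = m₁ := by
      simpa using hC 0
    have h1card : (univ.filter (fun j : ZMod N => C j = 1)).card = m₂ := by
      simpa using hC 1
    have hne0 : ∃ j : ZMod N, C j = 0 := fiber_nonempty C 0 hm1 h0card
    have hne1 : ∃ j : ZMod N, C j = 1 := fiber_nonempty C 1 h2 h1card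
    have hb0 := fiber_lb C 0 hne0 1 m₁ h0card
    have hb1 := fiber_lb C 1 hne1 ℓ m₂ h1card
    rw [hTeq, sum_split C (fun j => cycleDist C j ^ 2)]
    have hNz : (N : ℤ) = m₁ + m₂ := by exact_mod_cast congrArg (Nat.cast : ℕ → ℤ) hN
    have hdmz : (N : ℤ) = m₂ * ℓ + r := by exact_mod_cast congrArg (Nat.cast : ℕ → ℤ) hdm
    have hNl : (N : ℤ) * ℓ = m₂ * ℓ * ℓ + r * ℓ := by rw [hdmz]; ring
    zify [le_of_lt hrlt]
    zify at hb0 hb1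
    linarith [hb0, hb1, hNl, hNz, hdmz]
  have hmemS : T ∈ {s : ℕ | ∃ C : ZMod N → Fin 2, Admissible ![m₁, m₂] C ∧
      ∑ j : ZMod N, cycleDist C j ^ 2 = s} := ⟨cyc N ℓ r m₂, hCadm, hCsum⟩
  have hfirst : IsLeast {s : ℕ | ∃ C : ZMod N → Fin 2, Admissible ![m₁, m₂] C ∧
      ∑ j : ZMod N, cycleDist C j ^ 2 = s} T := ⟨hmemS, hlb⟩
  refine ⟨hfirst, ?_, ?_⟩
  · exact ⟨cyc N ℓ r m₂, hCadm, by
      rw [variance_eq _ (total_sum hm1 h2 _ hCadm), hCsum]⟩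
  · rintro v ⟨C, hC, rfl⟩
    rw [variance_eq C (total_sum hm1 h2 C hC)]
    have hTle : T ≤ ∑ j : ZMod N, cycleDist C j ^ 2 := hlb _ ⟨C, hC, rfl⟩
    have hN0 : (0 : ℚ) < N := by
      have := Nat.pos_of_ne_zero (NeZero.ne N)
      exact_mod_cast this
    exact sub_le_sub_right ((div_le_div_iff_of_pos_right hN0).mpr (by exact_mod_cast hTle)) 4
end
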